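/- Let S be a bounded linear operator on a complex Hilbert space H such that Re S is a positive operator, or Im S is a positive operator. Then ‖S‖² − ‖S²‖ ≤ 2·‖Re S‖·‖Im S‖. -/

import Mathlib

/-- `|S| = (S* S)^{1/2}`, via the continuous functional calculus. -/
noncomputable def absOp {H : Type*} [NormedAddCommGroup H] [InnerProductSpace ℂ H]
    [CompleteSpace H] (S : H →L[ℂ] H) : H →L[ℂ] H :=
  CFC.sqrt (ContinuousLinearMap.adjoint S * S)

/-- `Re S = (S + S*)/2`. -/
noncomputable def reOp {H : Type*} [NormedAddCommGroup H] [InnerProductSpace ℂ H]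
    [CompleteSpace H] (S : H →L[ℂ] H) : H →L[ℂ] H :=
  (2⁻¹ : ℂ) • (S + ContinuousLinearMap.adjoint S)

/-- `Im S = (S - S*)/(2i)`. -/
noncomputable def imOp {H : Type*} [NormedAddCommGroup H] [InnerProductSpace ℂ H]
    [CompleteSpace H] (S : H →L[ℂ] H) : H →L[ℂ] H :=
  (2 * Complex.I)⁻¹ • (S - ContinuousLinearMap.adjoint S)

/-- Numerical radius `ω(S) = sup {|⟨Sx,x⟩| : ‖x‖ = 1}`. -/
noncomputable def numRadius {H : Type*} [NormedAddCommGroup H] [InnerProductSpace ℂ H]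
    [CompleteSpace H] (S : H →L[ℂ] H) : ℝ :=
  ⨆ x : {x : H // ‖x‖ = 1}, ‖(inner ℂ (S x) (x : H) : ℂ)‖

/-- Spectral radius, as a real number. -/
noncomputable def specRad {H : Type*} [NormedAddCommGroup H] [InnerProductSpace ℂ H]
    [CompleteSpace H] (S : H →L[ℂ] H) : ℝ :=
  (spectralRadius ℂ S).toReal

section Aux

open ContinuousLinearMap RCLike

variable {H : Type*} [NormedAddCommGroup H] [InnerProductSpace ℂ H] [CompleteSpace H]

local notation "⟪" x ", " y "⟫" => @inner ℂ _ _ x y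

/-- For a positive operator, `‖A x‖² ≤ ‖A‖ · re⟪A x, x⟫`. -/
lemma pos_norm_sq_le (A : H →L[ℂ] H) (hA : A.IsPositive) (x : H) :
    ‖A x‖ ^ 2 ≤ ‖A‖ * re (⟪A x, x⟫) := by
  set w := A x with hw
  set n : ℝ := ‖w‖ ^ 2 with hn
  set a : ℝ := re (⟪A x, x⟫) with ha
  set b : ℝ := re (⟪A w, w⟫) with hb
  have ha0 : 0 ≤ a := hA.re_inner_nonneg_left x
  have hb0 : 0 ≤ b := hA.re_inner_nonneg_left w
  have hn0 : 0 ≤ n := sq_nonneg _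
  have hbn : b ≤ ‖A‖ * n := by
    calc b ≤ ‖(⟪A w, w⟫)‖ := re_le_norm _
    _ ≤ ‖A w‖ * ‖w‖ := norm_inner_le_norm _ _
    _ ≤ (‖A‖ * ‖w‖) * ‖w‖ := by
        have := A.le_opNorm w
        nlinarith [norm_nonneg w]
    _ = ‖A‖ * n := by rw [hn]; ring
  have hAw : ⟪A w, x⟫ = ⟪w, w⟫ := by
    have h1 : ⟪A w, x⟫ = ⟪w, A x⟫ := by
      exact hA.isSymmetric w x
    rw [h1, ← hw]
  have key : ∀ t : ℝ, 0 ≤ a - 2 * t * n + t ^ 2 * b := by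
    intro t
    have h0 := hA.re_inner_nonneg_left (x - (t : ℂ) • w)
    have hA1 : A (x - (t : ℂ) • w) = w - (t : ℂ) • (A w) := by
      rw [map_sub, map_smul, ← hw]
    rw [hA1, inner_sub_left, inner_sub_right, inner_sub_right,
      inner_smul_left, inner_smul_right, inner_smul_left, inner_smul_right, hAw] at h0
    simp only [Complex.conj_ofReal, map_sub, Complex.re_ofReal_mul, RCLike.re_to_complex] at h0
    simp only [← RCLike.re_to_complex] at h0
    have h2 : re (⟪w, w⟫) = n := by rw [hn, inner_self_eq_norm_sq]
    have h3 : re (⟪w, x⟫) = a := by rw [ha, hw]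
    rw [h2, h3] at h0
    nlinarith [h0]
  rcases eq_or_lt_of_le hn0 with hn1 | hn1
  · rw [← hn1]
    positivity
  · have hbpos : 0 < b := by
      rcases eq_or_lt_of_le hb0 with hb1 | hb1
      · exfalso
        have hk := key ((a + 1) / n)
        rw [← hb1] at hk
        have hd : (a + 1) / n * n = a + 1 := div_mul_cancel₀ _ (ne_of_gt hn1)
        nlinarith
      · exact hb1
    have hk := key (n / b)
    have e1 : n / b * n = n ^ 2 / b := by ring
    have e2 : (n / b) ^ 2 * b = n ^ 2 / b := by
      field_simp
    have e1' : 2 * (n / b) * n = 2 * (n ^ 2 / b) := by ring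
    have h4 : n ^ 2 / b ≤ a := by
      rw [e1', e2] at hk; linarith
    have h2 : n ^ 2 ≤ a * b := by
      calc n ^ 2 = n ^ 2 / b * b := (div_mul_cancel₀ _ (ne_of_gt hbpos)).symm
      _ ≤ a * b := mul_le_mul_of_nonneg_right h4 hb0
    nlinarith [mul_le_mul_of_nonneg_left hbn ha0, h2, hn1]

/-- A positive operator shifted by half its norm has norm at most half the norm. -/
lemma pos_shift_norm_le (A : H →L[ℂ] H) (hA : A.IsPositive) :
    ‖A - ((‖A‖ / 2 : ℝ) : ℂ) • 1‖ ≤ ‖A‖ / 2 := by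
  have hc : (0:ℝ) ≤ ‖A‖ / 2 := by positivity
  refine opNorm_le_bound _ hc fun x => ?_
  have hx : (A - ((‖A‖ / 2 : ℝ) : ℂ) • 1) x = A x - ((‖A‖ / 2 : ℝ) : ℂ) • x := by
    simp
  rw [hx]
  have hsq : ‖A x - ((‖A‖ / 2 : ℝ) : ℂ) • x‖ ^ 2
      = ‖A x‖ ^ 2 - ‖A‖ * re (⟪A x, x⟫) + (‖A‖ / 2) ^ 2 * ‖x‖ ^ 2 := by
    rw [@norm_sub_sq ℂ]
    rw [inner_smul_right]
    simp only [Complex.re_ofReal_mul, RCLike.re_to_complex]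
    rw [norm_smul]
    simp only [Complex.norm_real, Real.norm_eq_abs, abs_of_nonneg hc]
    rw [mul_pow]
    push_cast
    simp only [← RCLike.re_to_complex]
    ring
  have hpos := pos_norm_sq_le A hA x
  have h2 : ‖A x - ((‖A‖ / 2 : ℝ) : ℂ) • x‖ ^ 2 ≤ (‖A‖ / 2 * ‖x‖) ^ 2 := by
    rw [hsq]; nlinarith
  have h3 : (0:ℝ) ≤ ‖A‖ / 2 * ‖x‖ := by positivity
  nlinarith [norm_nonneg (A x - ((‖A‖ / 2 : ℝ) : ℂ) • x)]

/-- Commutator bound for a positive operator. -/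
lemma comm_norm_le (A B : H →L[ℂ] H) (hA : A.IsPositive) :
    ‖A * B - B * A‖ ≤ ‖A‖ * ‖B‖ := by
  set c : ℂ := ((‖A‖ / 2 : ℝ) : ℂ)
  set D := A - c • 1 with hD
  have hid : A * B - B * A = D * B - B * D := by
    rw [hD]; simp only [sub_mul, mul_sub, smul_mul_assoc, mul_smul_comm, one_mul, mul_one]
    abel
  have hDn : ‖D‖ ≤ ‖A‖ / 2 := pos_shift_norm_le A hA
  calc ‖A * B - B * A‖ = ‖D * B - B * D‖ := by rw [hid]
  _ ≤ ‖D * B‖ + ‖B * D‖ := norm_sub_le _ _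
  _ ≤ ‖D‖ * ‖B‖ + ‖B‖ * ‖D‖ := add_le_add (norm_mul_le _ _) (norm_mul_le _ _)
  _ ≤ ‖A‖ / 2 * ‖B‖ + ‖B‖ * (‖A‖ / 2) := by
      have hB := norm_nonneg B
      have hD0 := norm_nonneg D
      nlinarith
  _ = ‖A‖ * ‖B‖ := by ring

set_option maxHeartbeats 1000000 in
/-- Key inequality -/
lemma key_main (S : H →L[ℂ] H) :
    ‖S‖ ^ 2 - ‖S ^ 2‖ ≤ ‖ContinuousLinearMap.adjoint S * S - S * ContinuousLinearMap.adjoint S‖ := by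
  set K := ‖ContinuousLinearMap.adjoint S * S - S * ContinuousLinearMap.adjoint S‖ with hK
  set M := ‖S ^ 2‖ with hM
  by_contra hcon
  push_neg at hcon
  have hM0 : 0 ≤ M := norm_nonneg _
  have hK0 : 0 ≤ K := norm_nonneg _
  have hS2 : M + K < ‖S‖ ^ 2 := by linarith
  have hc : Real.sqrt (M + K) < ‖S‖ := by
    have h := Real.sqrt_lt_sqrt (by linarith : (0:ℝ) ≤ M + K) hS2
    rwa [Real.sqrt_sq (norm_nonneg S)] at h
  obtain ⟨x, hx⟩ : ∃ x, Real.sqrt (M + K) * ‖x‖ < ‖S x‖ := by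
    by_contra h
    push_neg at h
    exact absurd (S.opNorm_le_bound (Real.sqrt_nonneg _) h) (not_le.mpr hc)
  have hx0 : x ≠ 0 := by
    rintro rfl
    rw [norm_zero, mul_zero, map_zero, norm_zero] at hx
    exact lt_irrefl 0 hx
  set y := ((‖x‖⁻¹ : ℝ) : ℂ) • x with hy
  have hxpos : 0 < ‖x‖ := norm_pos_iff.mpr hx0
  have hnc : ‖((‖x‖⁻¹ : ℝ) : ℂ)‖ = ‖x‖⁻¹ := by
    rw [Complex.norm_real, Real.norm_eq_abs, abs_of_nonneg (by positivity)]
  have hy1 : ‖y‖ = 1 := by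
    rw [hy, norm_smul, hnc, inv_mul_cancel₀ (ne_of_gt hxpos)]
  have hys : Real.sqrt (M + K) < ‖S y‖ := by
    rw [hy, map_smul, norm_smul, hnc]
    rw [lt_inv_mul_iff₀ hxpos]
    linarith [hx]
  set u := S y with hu
  set s : ℝ := ‖u‖ ^ 2 with hs
  have hsMK : M + K < s := by
    have h0 : 0 ≤ Real.sqrt (M + K) := Real.sqrt_nonneg _
    have := Real.sq_sqrt (by linarith : (0:ℝ) ≤ M + K)
    nlinarith [hys]
  -- `s ≤ ‖S† u‖`
  have hb : s ≤ ‖ContinuousLinearMap.adjoint S u‖ := by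
    have h1 : (⟪u, u⟫) = ((‖u‖ : ℂ)) ^ 2 := inner_self_eq_norm_sq_to_K u
    have h2 : (⟪ContinuousLinearMap.adjoint S u, y⟫) = ⟪u, S y⟫ :=
      ContinuousLinearMap.adjoint_inner_left S y u
    calc s = ‖(⟪u, u⟫)‖ := by
          rw [h1]
          push_cast
          rw [norm_pow, Complex.norm_real, Real.norm_eq_abs, abs_norm, hs]
    _ = ‖(⟪ContinuousLinearMap.adjoint S u, y⟫)‖ := by rw [h2, ← hu]
    _ ≤ ‖ContinuousLinearMap.adjoint S u‖ * ‖y‖ := norm_inner_le_norm _ _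
    _ = ‖ContinuousLinearMap.adjoint S u‖ := by rw [hy1, mul_one]
  -- identity: `‖S u‖² − ‖S† u‖² = re ⟪C u, u⟫`
  have hid : ‖S u‖ ^ 2 - ‖ContinuousLinearMap.adjoint S u‖ ^ 2
      = re (⟪(ContinuousLinearMap.adjoint S * S - S * ContinuousLinearMap.adjoint S) u, u⟫) := by
    have e1 : (⟪ContinuousLinearMap.adjoint S (S u), u⟫) = ⟪S u, S u⟫ :=
      ContinuousLinearMap.adjoint_inner_left S u (S u)
    have e2 : (⟪ContinuousLinearMap.adjoint S u, ContinuousLinearMap.adjoint S u⟫)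
        = ⟪S (ContinuousLinearMap.adjoint S u), u⟫ :=
      ContinuousLinearMap.adjoint_inner_right S (ContinuousLinearMap.adjoint S u) u
    rw [ContinuousLinearMap.sub_apply, inner_sub_left, map_sub,
      ContinuousLinearMap.mul_apply, ContinuousLinearMap.mul_apply, e1, ← e2,
      inner_self_eq_norm_sq, inner_self_eq_norm_sq]
  have hCu : |re (⟪(ContinuousLinearMap.adjoint S * S - S * ContinuousLinearMap.adjoint S) u, u⟫)|
      ≤ K * s := by
    calc |re (⟪(ContinuousLinearMap.adjoint S * S - S * ContinuousLinearMap.adjoint S) u, u⟫)|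
        ≤ ‖(⟪(ContinuousLinearMap.adjoint S * S - S * ContinuousLinearMap.adjoint S) u, u⟫)‖ :=
          abs_re_le_norm _
    _ ≤ ‖(ContinuousLinearMap.adjoint S * S - S * ContinuousLinearMap.adjoint S) u‖ * ‖u‖ :=
          norm_inner_le_norm _ _
    _ ≤ (K * ‖u‖) * ‖u‖ := by
          have := (ContinuousLinearMap.adjoint S * S - S * ContinuousLinearMap.adjoint S).le_opNorm u
          nlinarith [norm_nonneg u]
    _ = K * s := by rw [hs]; ring
  have hSu : ‖S u‖ ≤ M := by
    have h1 : S u = (S ^ 2) y := by rw [pow_two, ContinuousLinearMap.mul_apply, hu]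
    rw [h1]
    calc ‖(S ^ 2) y‖ ≤ ‖S ^ 2‖ * ‖y‖ := (S ^ 2).le_opNorm y
    _ = M := by rw [hy1, mul_one, hM]
  -- combine: s² ≤ ‖S† u‖² = ‖S u‖² − re⟪Cu,u⟫ ≤ M² + K s
  have habs := abs_le.mp hCu
  nlinarith [hb, hid, hSu, norm_nonneg (ContinuousLinearMap.adjoint S u), norm_nonneg (S u), hsMK, habs.1, habs.2]

end Aux

theorem stmt_17 {H : Type*} [NormedAddCommGroup H] [InnerProductSpace ℂ H] [CompleteSpace H]
    (S : H →L[ℂ] H) (hS : (reOp S).IsPositive ∨ (imOp S).IsPositive) :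
    ‖S‖ ^ 2 - ‖S ^ 2‖ ≤ 2 * ‖reOp S‖ * ‖imOp S‖ := by
  have hC : ContinuousLinearMap.adjoint S * S - S * ContinuousLinearMap.adjoint S
      = (2 * Complex.I) • (reOp S * imOp S - imOp S * reOp S) := by
    rw [reOp, imOp]
    simp only [smul_mul_assoc, mul_smul_comm, smul_smul, smul_sub, sub_mul, mul_sub,
      add_mul, mul_add]
    match_scalars <;> (field_simp; try ring)
  have hnorm : ‖ContinuousLinearMap.adjoint S * S - S * ContinuousLinearMap.adjoint S‖
      = 2 * ‖reOp S * imOp S - imOp S * reOp S‖ := by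
    rw [hC, norm_smul]
    norm_num
  have hcomm : ‖reOp S * imOp S - imOp S * reOp S‖ ≤ ‖reOp S‖ * ‖imOp S‖ := by
    rcases hS with hA | hB
    · exact comm_norm_le _ _ hA
    · have h := comm_norm_le (imOp S) (reOp S) hB
      calc ‖reOp S * imOp S - imOp S * reOp S‖
          = ‖imOp S * reOp S - reOp S * imOp S‖ := by
            rw [← norm_neg, neg_sub]
      _ ≤ ‖imOp S‖ * ‖reOp S‖ := h
      _ = ‖reOp S‖ * ‖imOp S‖ := mul_comm _ _
  calc ‖S‖ ^ 2 - ‖S ^ 2‖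
      ≤ ‖ContinuousLinearMap.adjoint S * S - S * ContinuousLinearMap.adjoint S‖ := key_main S
  _ = 2 * ‖reOp S * imOp S - imOp S * reOp S‖ := hnorm
  _ ≤ 2 * (‖reOp S‖ * ‖imOp S‖) := by linarith
  _ = 2 * ‖reOp S‖ * ‖imOp S‖ := by ring
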